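/- For every positive natural number N, every family of real charges Q : Fin N → ℝ with ∑_{k} Q k = 0, and every family of charge points Z : Fin N → ℂ, the function z ↦ ∑_{k} Q k · Real.log ‖z − Z k‖ tends to 0 as z tends to infinity in ℂ. -/

import Mathlib

open Filter

lemma log_diff_tendsto (c : ℂ) :
    Tendsto (fun z : ℂ => Real.log ‖z - c‖ - Real.log ‖z‖)
      (Bornology.cobounded ℂ) (nhds 0) := by
  have hnorm : Tendsto (fun z : ℂ => ‖z‖) (Bornology.cobounded ℂ) atTop :=
    tendsto_norm_cobounded_atTop
  -- ratio tends to 1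
  have hratio : Tendsto (fun z : ℂ => ‖z - c‖ / ‖z‖) (Bornology.cobounded ℂ) (nhds 1) := by
    have hbound : Tendsto (fun z : ℂ => ‖c‖ / ‖z‖) (Bornology.cobounded ℂ) (nhds 0) :=
      tendsto_const_nhds.div_atTop hnorm
    have h0 : Tendsto (fun z : ℂ => ‖z - c‖ / ‖z‖ - 1) (Bornology.cobounded ℂ) (nhds 0) := by
      apply squeeze_zero_norm' ?_ hbound
      filter_upwards [hnorm.eventually_gt_atTop 0] with z hz
      have : ‖z - c‖ / ‖z‖ - 1 = (‖z - c‖ - ‖z‖) / ‖z‖ := by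
        rw [sub_div, div_self hz.ne']
      rw [this, Real.norm_eq_abs, abs_div, abs_of_pos hz, div_le_div_iff_of_pos_right hz]
      calc |‖z - c‖ - ‖z‖| ≤ ‖(z - c) - z‖ := abs_norm_sub_norm_le _ _
        _ = ‖c‖ := by simp [norm_sub_rev]
    have := h0.add_const 1
    simpa using this
  have hlog : Tendsto (fun z : ℂ => Real.log (‖z - c‖ / ‖z‖)) (Bornology.cobounded ℂ)
      (nhds 0) := by
    have := (Real.continuousAt_log one_ne_zero).tendsto.comp hratio
    simpa [Function.comp_def] using this
  refine hlog.congr' ?_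
  filter_upwards [hnorm.eventually_gt_atTop ‖c‖] with z hz
  have hz0 : (0:ℝ) < ‖z‖ := lt_of_le_of_lt (norm_nonneg c) hz
  have hzc : (0:ℝ) < ‖z - c‖ := by
    have : ‖z‖ - ‖c‖ ≤ ‖z - c‖ := norm_sub_norm_le _ _
    linarith
  rw [Real.log_div hzc.ne' hz0.ne']

theorem stmt_1 (N : ℕ) (hN : 0 < N) (Q : Fin N → ℝ) (hQ : ∑ k, Q k = 0) (Z : Fin N → ℂ) :
    Tendsto (fun z : ℂ => ∑ k, Q k * Real.log ‖z - Z k‖)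
      (Bornology.cobounded ℂ) (nhds 0) := by
  have key : ∀ z : ℂ, ∑ k, Q k * Real.log ‖z - Z k‖
      = ∑ k, Q k * (Real.log ‖z - Z k‖ - Real.log ‖z‖) := by
    intro z
    rw [Finset.sum_congr rfl (fun k _ => mul_sub (Q k) _ _), Finset.sum_sub_distrib,
      ← Finset.sum_mul, hQ]
    ring
  simp only [key]
  have h0 : (0:ℝ) = ∑ k : Fin N, (0:ℝ) := by simp
  rw [h0]
  apply tendsto_finset_sum
  intro k _
  have := (log_diff_tendsto (Z k)).const_mul (Q k)
  simpa using this
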